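/- arXiv:2007.09846 — 2 statements merged into one kernel-verified Lean document; each statement's English description precedes it below -/
import Mathlib

section
/- For any point p in a metric space X, the distance function dist_p(x) = dist(p,x) is an extremal function: it is admissible, and any admissible function s with s ≤ dist_p pointwise equals dist_p. -/
def Admissible {X : Type*} [MetricSpace X] (r : X → ℝ) : Prop :=
  ∀ x y : X, dist x y ≤ r x + r y

theorem distfun_extremal {X : Type*} [MetricSpace X] (p : X) :
    Admissible (fun x => dist p x) ∧
      ∀ s : X → ℝ, Admissible s → (∀ x, s x ≤ dist p x) →
        s = fun x => dist p x := by
  constructor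
  · intro x y
    calc dist x y ≤ dist x p + dist p y := dist_triangle x p y
    _ = dist p x + dist p y := by rw [dist_comm]
  · intro s hs hle
    have hp : s p = 0 := by
      have h1 := hs p p
      have h2 := hle p
      simp [dist_self] at h1 h2
      linarith
    funext x
    have h := hs p x
    rw [hp] at h
    have := hle x
    simp at h
    linarith
end

section
/- Suppose a metric space X has the property that for every subspace A ⊂ X, every metric space Y, and every 1-Lipschitz map f : A → Y, f extends to a 1-Lipschitz map F : X → Y. Then X is an ultrametric space: dist(x,z) ≤ max{dist(x,y), dist(y,z)} for all x, y, z ∈ X. -/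
theorem ultrametric_of_extension {X : Type*} [MetricSpace X]
    (h : ∀ (A : Set X) (Y : Type) [MetricSpace Y] (f : A → Y),
      LipschitzWith 1 f → ∃ F : X → Y, LipschitzWith 1 F ∧ ∀ a : A, F ↑a = f a) :
    ∀ x y z : X, dist x z ≤ max (dist x y) (dist y z) := by
  intro x y z
  by_contra h'
  push_neg at h'
  have hc : 0 < dist x z := lt_of_le_of_lt (le_max_of_le_left dist_nonneg) h'
  have hxz : x ≠ z := by
    intro e; rw [e, dist_self] at hc; exact lt_irrefl _ hc
  set c := dist x z with hcdef
  -- two-point metric space on Bool with distance c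
  letI : MetricSpace Bool := MetricSpace.ofDistTopology
    (fun a b => if a = b then 0 else c)
    (fun a => by simp)
    (fun a b => by by_cases hab : a = b <;> simp [hab, eq_comm])
    (fun a b d => by
      cases a <;> cases b <;> cases d <;> simp <;> linarith [hc.le])
    (fun s => by
      constructor
      · intro _ a ha
        exact ⟨c, hc, fun b hb => by
          by_cases hab : a = b
          · exact hab ▸ ha
          · rw [if_neg hab] at hb
            exact absurd hb (lt_irrefl c)⟩
      · intro _; exact isOpen_discrete s)
    (fun a b hab => by
      by_cases hab' : a = b
      · exact hab'
      · simp [hab'] at hab; exact absurd hab (ne_of_gt hc))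
  have hdist : ∀ a b : Bool, dist a b = if a = b then 0 else c := fun a b => rfl
  set A : Set X := {x, z} with hA
  have hxA : x ∈ A := Set.mem_insert _ _
  have hzA : z ∈ A := Set.mem_insert_of_mem _ rfl
  letI := Classical.decEq X
  set f : A → Bool := fun a => if (a : X) = x then false else true with hf
  have hfl : LipschitzWith 1 f := by
    apply LipschitzWith.of_dist_le_mul
    intro a b
    rw [NNReal.coe_one, one_mul, Subtype.dist_eq]
    rcases a with ⟨a, rfl | rfl⟩ <;> rcases b with ⟨b, rfl | rfl⟩
    · simp [hf, hdist, dist_nonneg]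
    · simp only [hf, if_pos rfl]
      simp only [if_neg (Ne.symm hxz), hdist]
      simp only [Bool.false_eq_true, if_true, if_false, reduceIte]
      exact le_of_eq hcdef
    · simp only [hf, if_pos rfl]
      simp only [if_neg (Ne.symm hxz), hdist]
      simp only [Bool.true_eq_false, if_true, if_false, reduceIte]
      exact le_of_eq (hcdef.trans (dist_comm b a))
    · simp [hf, hdist, dist_nonneg]
  obtain ⟨F, hFl, hFe⟩ := h A Bool f hfl
  have hFx : F x = false := by
    have := hFe ⟨x, hxA⟩; simpa [hf] using this
  have hFz : F z = true := by
    have := hFe ⟨z, hzA⟩; simpa [hf, Ne.symm hxz] using this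
  cases hFy : F y with
  | false =>
      have := hFl.dist_le_mul y z
      rw [hFy, hFz, NNReal.coe_one, one_mul, hdist] at this
      simp at this
      exact absurd (le_trans this (le_max_right _ _)) (not_le.mpr h')
  | true =>
      have := hFl.dist_le_mul x y
      rw [hFx, hFy, NNReal.coe_one, one_mul, hdist] at this
      simp at this
      exact absurd (le_trans this (le_max_left _ _)) (not_le.mpr h')
end
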